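/- arXiv:2307.11347 — 4 statements merged into one kernel-verified Lean document; each statement's English description precedes it below -/
import Mathlib

section
/- There exists a bijective correspondence between the set of wide subcategories of the heart H and the set of homology-determined thick subcategories of D, sending a wide subcategory W to the subcategory {X ∈ D | H^k X ∈ W for all k ∈ ℤ}, with inverse E ↦ H^0 E. Moreover, if the t-structure (D^{≤0}, D^{≥1}) is bounded, then the homology-determined thick subcategories of D are exactly the H^0-stable thick subcategories of D. -/
open CategoryTheory Limits ZeroObject

namespace ICEPaper

section AbelianPart


variable {A : Type*} [Category A] [Abelian A]

/-- A full additive subcategory (given by its class of objects), closed under isomorphisms. -/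
structure IsSubcat (C : Set A) : Prop where
  mem_of_iso : ∀ ⦃X Y : A⦄, (X ≅ Y) → X ∈ C → Y ∈ C
  zero_mem : (0 : A) ∈ C
  biprod_mem : ∀ ⦃X Y : A⦄, X ∈ C → Y ∈ C → (X ⊞ Y) ∈ C

/-- `C` is closed under extensions. -/
def ClosedUnderExtensions (C : Set A) : Prop :=
  ∀ (S : ShortComplex A), S.ShortExact → S.X₁ ∈ C → S.X₃ ∈ C → S.X₂ ∈ C

/-- `C` is closed under quotients in `A`. -/
def ClosedUnderQuotients (C : Set A) : Prop :=
  ∀ ⦃X Y : A⦄ (f : X ⟶ Y), Epi f → X ∈ C → Y ∈ C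

/-- `C` is closed under images. -/
def ClosedUnderImages (C : Set A) : Prop :=
  ∀ ⦃X Y : A⦄ (f : X ⟶ Y), X ∈ C → Y ∈ C → image f ∈ C

/-- `C` is closed under cokernels. -/
def ClosedUnderCokernels (C : Set A) : Prop :=
  ∀ ⦃X Y : A⦄ (f : X ⟶ Y), X ∈ C → Y ∈ C → cokernel f ∈ C

/-- `C` is closed under kernels. -/
def ClosedUnderKernels (C : Set A) : Prop :=
  ∀ ⦃X Y : A⦄ (f : X ⟶ Y), X ∈ C → Y ∈ C → kernel f ∈ C

/-- `C` is a torsion class in `A`. -/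
structure IsTorsionClass (C : Set A) : Prop where
  subcat : IsSubcat C
  ext : ClosedUnderExtensions C
  quot : ClosedUnderQuotients C

/-- `C` is a wide subcategory of `A`. -/
structure IsWide (C : Set A) : Prop where
  subcat : IsSubcat C
  ext : ClosedUnderExtensions C
  ker : ClosedUnderKernels C
  coker : ClosedUnderCokernels C

/-- `C` is an ICE-closed subcategory of `A`. -/
structure IsICEClosed (C : Set A) : Prop where
  subcat : IsSubcat C
  im : ClosedUnderImages C
  coker : ClosedUnderCokernels C
  ext : ClosedUnderExtensions C

/-- `αC = {X ∈ C ∣ every morphism f : C' ⟶ X with C' ∈ C has ker f ∈ C}`. -/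
def alphaSub (C : Set A) : Set A :=
  {X | X ∈ C ∧ ∀ ⦃C' : A⦄ (f : C' ⟶ X), C' ∈ C → kernel f ∈ C}

/-- `D` is a torsion class in the full (wide, hence abelian) subcategory `W` of `A`:
`D ⊆ W`, and `D` is closed under extensions and quotients inside `W`.
(Here short exact sequences and epimorphisms in the wide subcategory `W` are
exactly those of `A` with terms in `W`.) -/
structure IsTorsionClassIn (W D : Set A) : Prop where
  subset : D ⊆ W
  subcat : IsSubcat D
  ext : ∀ (S : ShortComplex A), S.ShortExact → S.X₁ ∈ D → S.X₃ ∈ D → S.X₂ ∈ D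
  quot : ∀ ⦃X Y : A⦄ (f : X ⟶ Y), Epi f → X ∈ D → Y ∈ W → Y ∈ D

/-- The exactness condition defining narrow sequences: for every exact sequence
`A → B → C → D → E` with `A ∈ C(k−1)`, `B, D ∈ C(k)` and `E ∈ C(k+1)` one has `C ∈ C(k)`. -/
def NarrowCondition (C : ℤ → Set A) : Prop :=
  ∀ (k : ℤ) (S : ComposableArrows A 4), S.Exact →
    S.obj' 0 ∈ C (k - 1) → S.obj' 1 ∈ C k → S.obj' 3 ∈ C k → S.obj' 4 ∈ C (k + 1) →
    S.obj' 2 ∈ C k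

/-- A narrow sequence in `A`. -/
structure IsNarrowSequence (C : ℤ → Set A) : Prop where
  subcat : ∀ k, IsSubcat (C k)
  decreasing : ∀ k, C (k + 1) ⊆ C k
  narrow : NarrowCondition C

/-- An ICE sequence in `A`. -/
structure IsICESequence (C : ℤ → Set A) : Prop where
  ice : ∀ k, IsICEClosed (C k)
  tors : ∀ k, IsTorsionClassIn (alphaSub (C k)) (C (k + 1))

/-- The zero subcategory. -/
def zeroSubcat : Set A := {X | IsZero X}


end AbelianPart


section Approximations

variable {C : Type*} [Category C]

/-- A subcategory `B` (given by its class of objects) of a category is contravariantly finite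
if every object admits a right `B`-approximation. -/
def ContravariantlyFinite (B : Set C) : Prop :=
  ∀ X : C, ∃ (B₀ : C) (_ : B₀ ∈ B) (f : B₀ ⟶ X),
    ∀ (B' : C) (_ : B' ∈ B) (g : B' ⟶ X), ∃ h : B' ⟶ B₀, h ≫ f = g

/-- Dually, `B` is covariantly finite if every object admits a left `B`-approximation. -/
def CovariantlyFinite (B : Set C) : Prop :=
  ∀ X : C, ∃ (B₀ : C) (_ : B₀ ∈ B) (f : X ⟶ B₀),
    ∀ (B' : C) (_ : B' ∈ B) (g : X ⟶ B'), ∃ h : B₀ ⟶ B', f ≫ h = g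

end Approximations

open Pretriangulated Triangulated

variable {D : Type*} [Category D] [Preadditive D] [HasZeroObject D] [HasShift D ℤ]
  [∀ n : ℤ, (shiftFunctor D n).Additive] [Pretriangulated D]

/-- The shifted subcategory `U[k] = {X ∣ X⟦-k⟧ ∈ U}`. -/
def shiftSet (U : Set D) (k : ℤ) : Set D := {X : D | X⟦(-k)⟧ ∈ U}

/-- A preaisle: a subcategory (full, iso-closed, containing `0`) closed under extensions and
positive shifts. -/
structure IsPreaisle (U : Set D) : Prop where
  mem_of_iso : ∀ ⦃X Y : D⦄, (X ≅ Y) → X ∈ U → Y ∈ U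
  zero_mem : (0 : D) ∈ U
  ext : ∀ (T : Triangle D), T ∈ (distTriang D) → T.obj₁ ∈ U → T.obj₃ ∈ U → T.obj₂ ∈ U
  shift : ∀ ⦃X : D⦄, X ∈ U → X⟦(1 : ℤ)⟧ ∈ U

/-- A thick subcategory: a triangulated subcategory closed under direct summands. -/
structure IsThick (E : Set D) : Prop where
  mem_of_iso : ∀ ⦃X Y : D⦄, (X ≅ Y) → X ∈ E → Y ∈ E
  zero_mem : (0 : D) ∈ E
  ext : ∀ (T : Triangle D), T ∈ (distTriang D) → T.obj₁ ∈ E → T.obj₃ ∈ E → T.obj₂ ∈ E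
  shift : ∀ ⦃X : D⦄ (k : ℤ), X ∈ E → X⟦k⟧ ∈ E
  summand : ∀ ⦃X Y : D⦄ (i : X ⟶ Y) (r : Y ⟶ X), i ≫ r = 𝟙 X → Y ∈ E → X ∈ E

variable (t : TStructure D)

/-- `D^{≤n}` as a set of objects. -/
def DLE (n : ℤ) : Set D := {X : D | t.le n X}

/-- `D^{≥n}` as a set of objects. -/
def DGE (n : ℤ) : Set D := {X : D | t.ge n X}

/-- The heart `D^{≤0} ∩ D^{≥0}` of the t-structure, as a set of objects of `D`. -/
def heartSet : Set D := {X : D | t.le 0 X ∧ t.ge 0 X}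

/-- The t-structure `t` is bounded. -/
def BoundedT : Prop := ∀ X : D, (∃ n : ℤ, t.le n X) ∧ (∃ n : ℤ, t.ge n X)

/-- The t-structure `t` is nondegenerate. -/
def NonDegenerateT : Prop :=
  (∀ X : D, (∀ n : ℤ, t.le n X) → IsZero X) ∧ (∀ X : D, (∀ n : ℤ, t.ge n X) → IsZero X)

/-- `U` is an aisle: it is the aisle (`D'^{≤0}`) of some t-structure on `D`. -/
def IsAisle (U : Set D) : Prop := ∃ t' : TStructure D, U = DLE t' 0

/-- Data realizing the heart of the t-structure `t` as an abelian category `A`: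
a fully faithful additive functor `ι : A ⥤ D` with essential image the heart of `t`,
identifying short exact sequences in `A` with distinguished triangles of `D` with all three
objects in the heart, together with the associated cohomological functor `H⁰ : D ⥤ A`
(characterized by being homological, restricting to the identity on the heart, and the
standard vanishing on `D^{≤n}` and `D^{≥n}`). -/
structure HeartData (A : Type*) [Category A] [Abelian A] where
  ι : A ⥤ D
  full : ι.Full
  faithful : ι.Faithful
  additive : ι.Additive
  mem_heart : ∀ Y : A, ι.obj Y ∈ heartSet t
  heart_mem : ∀ X : D, X ∈ heartSet t → ∃ Y : A, Nonempty (ι.obj Y ≅ X)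
  shortExact_iff : ∀ S : ShortComplex A, S.ShortExact ↔
    ∃ h : ι.obj S.X₃ ⟶ (ι.obj S.X₁)⟦(1 : ℤ)⟧,
      Triangle.mk (ι.map S.f) (ι.map S.g) h ∈ distTriang D
  H0 : D ⥤ A
  homological : H0.IsHomological
  H0_additive : H0.Additive
  heartIso : ι ⋙ H0 ≅ 𝟭 A
  LE_vanish : ∀ (X : D) (n k : ℤ), t.le n X → n < k → IsZero (H0.obj (X⟦k⟧))
  GE_vanish : ∀ (X : D) (n k : ℤ), t.ge n X → k < n → IsZero (H0.obj (X⟦k⟧))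

variable {t} {A : Type*} [Category A] [Abelian A] (hd : HeartData t A)

/-- The cohomology `H^k = H⁰ ∘ ⟦k⟧`, on objects. -/
def HeartData.H (k : ℤ) (X : D) : A := hd.H0.obj (X⟦k⟧)

/-- `U ⊆ D` is homology-determined: `X ∈ U` iff `H^k X ∈ U[k]` for all `k ∈ ℤ`. -/
def IsHomDet (U : Set D) : Prop :=
  ∀ X : D, X ∈ U ↔ ∀ k : ℤ, hd.ι.obj (hd.H k X) ∈ shiftSet U k

/-- `H^k U`, the image of `U` under `H^k`, as a subcategory of the heart `A`
(closed under isomorphisms). -/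
def HkSet (U : Set D) (k : ℤ) : Set A := {Y : A | ∃ X ∈ U, Nonempty (Y ≅ hd.H k X)}

/-- `θ(C) = {X ∈ D ∣ H^k X ∈ C(k) for all k ∈ ℤ}`. -/
def thetaSet (C : ℤ → Set A) : Set D := {X : D | ∀ k : ℤ, hd.H k X ∈ C k}

/-- `E ⊆ D` is `H⁰`-stable: `H⁰ X ∈ E` for every `X ∈ E`. -/
def H0Stable (E : Set D) : Prop := ∀ X ∈ E, hd.ι.obj (hd.H 0 X) ∈ E


/-! ### Auxiliary lemmas for the proof -/

section AbelianAux

variable {A' : Type*} [Category A'] [Abelian A']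

lemma IsSubcat.mem_of_isZero {W : Set A'} (hW : IsSubcat W) {Y : A'} (hY : IsZero Y) : Y ∈ W :=
  hW.mem_of_iso hY.isoZero.symm hW.zero_mem

lemma IsWide.retract {W : Set A'} (hW : IsWide W) {X Y : A'} (i : X ⟶ Y) (r : Y ⟶ X)
    (hir : i ≫ r = 𝟙 X) (hY : Y ∈ W) : X ∈ W := by
  have hker : kernel (𝟙 Y - r ≫ i) ∈ W := hW.ker _ hY hY
  have hi0 : i ≫ (𝟙 Y - r ≫ i) = 0 := by
    simp only [Preadditive.comp_sub, Category.comp_id, ← Category.assoc, hir]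
    simp
  have hcond : kernel.ι (𝟙 Y - r ≫ i) ≫ (r ≫ i) = kernel.ι _ := by
    have := kernel.condition (𝟙 Y - r ≫ i)
    rw [Preadditive.comp_sub, Category.comp_id, sub_eq_zero] at this
    exact this.symm
  refine hW.subcat.mem_of_iso (?_ : kernel (𝟙 Y - r ≫ i) ≅ X) hker
  refine ⟨kernel.ι _ ≫ r, kernel.lift _ i hi0, ?_, ?_⟩
  · rw [← cancel_mono (kernel.ι (𝟙 Y - r ≫ i))]
    simp only [Category.assoc, kernel.lift_ι, Category.id_comp]
    exact hcond
  · simp [reassoc_of% (kernel.lift_ι (𝟙 Y - r ≫ i) i hi0), hir]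

lemma IsWide.mem_of_fourTerm {W : Set A'} (hW : IsWide W)
    {X₀ X₁ X₂ X₃ X₄ : A'} {f₀ : X₀ ⟶ X₁} {f₁ : X₁ ⟶ X₂} {f₂ : X₂ ⟶ X₃} {f₃ : X₃ ⟶ X₄}
    {w₀ : f₀ ≫ f₁ = 0} {w₁ : f₁ ≫ f₂ = 0} {w₂ : f₂ ≫ f₃ = 0}
    (e₁ : (ShortComplex.mk f₀ f₁ w₀).Exact) (e₂ : (ShortComplex.mk f₁ f₂ w₁).Exact)
    (e₃ : (ShortComplex.mk f₂ f₃ w₂).Exact)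
    (h₀ : X₀ ∈ W) (h₁ : X₁ ∈ W) (h₃ : X₃ ∈ W) (h₄ : X₄ ∈ W) : X₂ ∈ W := by
  have hmono : Mono (cokernel.desc f₀ f₁ w₀) := by
    rw [ShortComplex.exact_iff_mono_cokernel_desc] at e₁; exact e₁
  have hepi : Epi (kernel.lift f₃ f₂ w₂) := by
    rw [ShortComplex.exact_iff_epi_kernel_lift] at e₃; exact e₃
  have hfg : cokernel.desc f₀ f₁ w₀ ≫ kernel.lift f₃ f₂ w₂ = 0 := by
    rw [← cancel_epi (cokernel.π f₀), ← cancel_mono (kernel.ι f₃)]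
    simp [w₁]
  have hexact : (ShortComplex.mk _ _ hfg).Exact := by
    rw [ShortComplex.exact_iff_epi_kernel_lift]
    have h1 : Epi (kernel.lift f₂ f₁ w₁) := (ShortComplex.exact_iff_epi_kernel_lift _).1 e₂
    have hι : kernel.ι f₂ ≫ kernel.lift f₃ f₂ w₂ = 0 := by
      rw [← cancel_mono (kernel.ι f₃)]; simp
    have hv : IsIso (kernel.lift (kernel.lift f₃ f₂ w₂) (kernel.ι f₂) hι) := by
      have hι' : kernel.ι (kernel.lift f₃ f₂ w₂) ≫ f₂ = 0 := by
        have h : kernel.ι (kernel.lift f₃ f₂ w₂) ≫ f₂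
            = (kernel.ι (kernel.lift f₃ f₂ w₂) ≫ kernel.lift f₃ f₂ w₂) ≫ kernel.ι f₃ := by
          rw [Category.assoc, kernel.lift_ι]
        rw [h, kernel.condition, zero_comp]
      refine ⟨kernel.lift f₂ (kernel.ι _) hι', ?_, ?_⟩
      · rw [← cancel_mono (kernel.ι f₂)]; simp
      · rw [← cancel_mono (kernel.ι (kernel.lift f₃ f₂ w₂))]; simp
    have hcomm : cokernel.π f₀ ≫ kernel.lift (kernel.lift f₃ f₂ w₂) (cokernel.desc f₀ f₁ w₀) hfg
        = kernel.lift f₂ f₁ w₁ ≫ kernel.lift (kernel.lift f₃ f₂ w₂) (kernel.ι f₂) hι := by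
      rw [← cancel_mono (kernel.ι (kernel.lift f₃ f₂ w₂))]
      simp
    have : Epi (cokernel.π f₀ ≫
        kernel.lift (kernel.lift f₃ f₂ w₂) (cokernel.desc f₀ f₁ w₀) hfg) := by
      rw [hcomm]; exact epi_comp _ _
    exact epi_of_epi (cokernel.π f₀) _
  exact hW.ext _ (ShortComplex.ShortExact.mk' hexact hmono hepi) (hW.coker _ h₀ h₁) (hW.ker _ h₃ h₄)

lemma kernel_iso_of_exact {X₁ X₂ X₃ X₄ : A'} {a : X₁ ⟶ X₂} {b : X₂ ⟶ X₃} {c : X₃ ⟶ X₄}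
    {w₁ : a ≫ b = 0} {w₂ : b ≫ c = 0}
    (e₁ : (ShortComplex.mk a b w₁).Exact) (e₂ : (ShortComplex.mk b c w₂).Exact)
    (h : IsZero X₁) : Nonempty (X₂ ≅ kernel c) := by
  haveI : Mono (ShortComplex.mk b c w₂).f := e₁.mono_g (h.eq_zero_of_src _)
  exact ⟨e₂.fIsKernel.conePointUniqueUpToIso (limit.isLimit _)⟩

lemma cokernel_iso_of_exact {X₁ X₂ X₃ X₄ : A'} {a : X₁ ⟶ X₂} {b : X₂ ⟶ X₃} {c : X₃ ⟶ X₄}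
    {w₁ : a ≫ b = 0} {w₂ : b ≫ c = 0}
    (e₁ : (ShortComplex.mk a b w₁).Exact) (e₂ : (ShortComplex.mk b c w₂).Exact)
    (h : IsZero X₄) : Nonempty (cokernel a ≅ X₃) := by
  haveI : Epi (ShortComplex.mk a b w₁).g := e₂.epi_f (h.eq_zero_of_tgt _)
  exact ⟨(colimit.isColimit _).coconePointUniqueUpToIso e₁.gIsCokernel⟩

end AbelianAux

section TStructAux

variable (t)

lemma t_hom_zero {X Y : D} (f : X ⟶ Y) (a b : ℤ) (hab : a < b)
    (hX : t.le a X) (hY : t.ge b Y) : f = 0 := by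
  have h1 : t.le 0 (X⟦a⟧) := t.le_shift a a 0 (by omega) X hX
  have h2 : t.ge 1 (Y⟦a⟧) := t.ge_shift (a + 1) a 1 (by omega) Y (t.ge_antitone (by omega) Y hY)
  have h3 := t.zero' (f⟦a⟧') h1 h2
  apply (shiftFunctor D a).map_injective
  rw [h3, Functor.map_zero]

lemma t_isZero {X : D} (n m : ℤ) (h : n < m) (hn : t.le n X) (hm : t.ge m X) : IsZero X := by
  rw [IsZero.iff_id_eq_zero]
  exact t_hom_zero t (𝟙 X) n m h hn hm

lemma t_LE_ext (T : Triangle D) (hT : T ∈ distTriang D) (n : ℤ)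
    (h₁ : t.le n T.obj₁) (h₃ : t.le n T.obj₃) : t.le n T.obj₂ := by
  obtain ⟨Aq, B, hA, hB, f, g, h, mem⟩ := t.exists_triangle T.obj₂ n (n + 1) rfl
  have hg : g = 0 := by
    have h1 : T.mor₁ ≫ g = 0 := t_hom_zero t _ n (n + 1) (by omega) h₁ hB
    obtain ⟨g', hg'⟩ := Triangle.yoneda_exact₂ T hT g h1
    rw [hg', t_hom_zero t g' n (n + 1) (by omega) h₃ hB, comp_zero]
  obtain ⟨u, hu⟩ := Triangle.yoneda_exact₃ _ mem (𝟙 B) (by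
    show g ≫ 𝟙 B = 0
    rw [hg, zero_comp])
  have hu0 : u = 0 :=
    t_hom_zero t u (n - 1) (n + 1) (by omega) (t.le_shift n 1 (n - 1) (by omega) _ hA) hB
  have hBzero : IsZero B := by
    rw [IsZero.iff_id_eq_zero, hu, hu0, comp_zero]; rfl
  have : IsIso f := ((Triangle.mk f g h).isZero₃_iff_isIso₁ mem).1 hBzero
  exact ((t.le n).prop_iff_of_iso (asIso f)).1 hA

lemma t_GE_ext (T : Triangle D) (hT : T ∈ distTriang D) (n : ℤ)
    (h₁ : t.ge n T.obj₁) (h₃ : t.ge n T.obj₃) : t.ge n T.obj₂ := by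
  obtain ⟨Aq, B, hA, hB, f, g, h, mem⟩ := t.exists_triangle T.obj₂ (n - 1) n (by omega)
  have hf : f = 0 := by
    obtain ⟨v, hv⟩ := Triangle.coyoneda_exact₂ T hT f
      (t_hom_zero t _ (n - 1) n (by omega) hA h₃)
    rw [hv, t_hom_zero t v (n - 1) n (by omega) hA h₁, zero_comp]
  obtain ⟨w, hw⟩ := Triangle.coyoneda_exact₂ _ (inv_rot_of_distTriang _ mem) (𝟙 Aq) (by
    show 𝟙 Aq ≫ f = 0
    rw [hf, comp_zero])
  have hw0 : w = 0 :=
    t_hom_zero t w (n - 1) (n + 1) (by omega) hA (t.ge_shift n (-1) (n + 1) (by omega) _ hB)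
  have hAzero : IsZero Aq := by
    rw [IsZero.iff_id_eq_zero, hw, hw0, zero_comp]; rfl
  have : IsIso g := ((Triangle.mk f g h).isZero₁_iff_isIso₂ mem).1 hAzero
  exact ((t.ge n).prop_iff_of_iso (asIso g)).2 hB

end TStructAux

section HeartAux

lemma IsThick.mem_of_isZero {E : Set D} (hE : IsThick E) {X : D} (hX : IsZero X) : X ∈ E :=
  hE.mem_of_iso hX.isoZero.symm hE.zero_mem

/-- Isomorphism `H^k X ≅ H^k Y` induced by `X ≅ Y`. -/
noncomputable def HeartData.HmapIso (k : ℤ) {X Y : D} (e : X ≅ Y) : hd.H k X ≅ hd.H k Y :=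
  hd.H0.mapIso ((shiftFunctor D k).mapIso e)

/-- `H^k (X⟦n⟧) ≅ H^m X` when `n + k = m`. -/
noncomputable def HeartData.HshiftIso (n k m : ℤ) (h : n + k = m) (X : D) :
    hd.H k (X⟦n⟧) ≅ hd.H m X :=
  hd.H0.mapIso (((shiftFunctorAdd' D n k m h).symm.app X))

/-- `H^0 (ι Y) ≅ Y`. -/
noncomputable def HeartData.HheartIso (Y : A) : hd.H 0 (hd.ι.obj Y) ≅ Y :=
  hd.H0.mapIso ((shiftFunctorZero D ℤ).app (hd.ι.obj Y)) ≪≫ hd.heartIso.app Y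

lemma HeartData.isZero_H_heart (Y : A) (k : ℤ) (hk : k ≠ 0) :
    IsZero (hd.H k (hd.ι.obj Y)) := by
  rcases lt_or_gt_of_ne hk with h | h
  · exact hd.GE_vanish _ 0 k (hd.mem_heart Y).2 h
  · exact hd.LE_vanish _ 0 k (hd.mem_heart Y).1 h

lemma HeartData.isZero_H_of_isZero {X : D} (hX : IsZero X) (k : ℤ) : IsZero (hd.H k X) := by
  have := hd.H0_additive
  exact hd.H0.map_isZero ((shiftFunctor D k).map_isZero hX)

/-- `H^k ((ι Y)⟦-k⟧) ≅ Y`. -/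
noncomputable def HeartData.HshiftHeartIso (Y : A) (k : ℤ) :
    hd.H k ((hd.ι.obj Y)⟦(-k : ℤ)⟧) ≅ Y :=
  hd.HshiftIso (-k) k 0 (by omega) _ ≪≫ hd.HheartIso Y

lemma HeartData.isZero_HshiftHeart (Y : A) (k j : ℤ) (h : j ≠ k) :
    IsZero (hd.H j ((hd.ι.obj Y)⟦(-k : ℤ)⟧)) :=
  (hd.isZero_H_heart Y (-k + j) (by omega)).of_iso (hd.HshiftIso (-k) j _ rfl _)

lemma HeartData.theta_ext {W : Set A} (hW : IsWide W) (T : Triangle D)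
    (hT : T ∈ distTriang D) (h₁ : ∀ k : ℤ, hd.H k T.obj₁ ∈ W)
    (h₃ : ∀ k : ℤ, hd.H k T.obj₃ ∈ W) (k : ℤ) : hd.H k T.obj₂ ∈ W := by
  have := hd.homological
  letI : hd.H0.ShiftSequence ℤ := Functor.ShiftSequence.tautological _ _
  exact hW.mem_of_fourTerm
    (hd.H0.homologySequence_exact₁ T hT (k - 1) k (by omega))
    (hd.H0.homologySequence_exact₂ T hT k)
    (hd.H0.homologySequence_exact₃ T hT k (k + 1) rfl)
    (h₃ (k - 1)) (h₁ k) (h₃ k) (h₁ (k + 1))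

lemma HeartData.H_iso₂₃ (T : Triangle D) (hT : T ∈ distTriang D) (k : ℤ)
    (h1 : IsZero (hd.H k T.obj₁)) (h2 : IsZero (hd.H (k + 1) T.obj₁)) :
    Nonempty (hd.H k T.obj₂ ≅ hd.H k T.obj₃) := by
  have := hd.homological
  letI : hd.H0.ShiftSequence ℤ := Functor.ShiftSequence.tautological _ _
  have hm : Mono ((hd.H0.shift k).map T.mor₂) :=
    (hd.H0.homologySequence_mono_shift_map_mor₂_iff T hT k).2 (h1.eq_zero_of_src _)
  have he : Epi ((hd.H0.shift k).map T.mor₂) :=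
    (hd.H0.homologySequence_epi_shift_map_mor₂_iff T hT k (k + 1) rfl).2 (h2.eq_zero_of_tgt _)
  have : IsIso ((hd.H0.shift k).map T.mor₂) := isIso_of_mono_of_epi _
  exact ⟨@asIso _ _ _ _ ((hd.H0.shift k).map T.mor₂) this⟩

lemma HeartData.H_iso₁₂ (T : Triangle D) (hT : T ∈ distTriang D) (k : ℤ)
    (h1 : IsZero (hd.H (k - 1) T.obj₃)) (h2 : IsZero (hd.H k T.obj₃)) :
    Nonempty (hd.H k T.obj₁ ≅ hd.H k T.obj₂) := by
  have := hd.homological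
  letI : hd.H0.ShiftSequence ℤ := Functor.ShiftSequence.tautological _ _
  have hm : Mono ((hd.H0.shift k).map T.mor₁) :=
    (hd.H0.homologySequence_mono_shift_map_mor₁_iff T hT (k - 1) k (by omega)).2
      (h1.eq_zero_of_src _)
  have he : Epi ((hd.H0.shift k).map T.mor₁) :=
    (hd.H0.homologySequence_epi_shift_map_mor₁_iff T hT k).2 (h2.eq_zero_of_tgt _)
  have : IsIso ((hd.H0.shift k).map T.mor₁) := isIso_of_mono_of_epi _
  exact ⟨@asIso _ _ _ _ ((hd.H0.shift k).map T.mor₁) this⟩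

lemma HeartData.heart_comm {Y Y' : A} (f : Y ⟶ Y') :
    hd.H0.map ((hd.ι.map f)⟦(0 : ℤ)⟧') ≫ (hd.HheartIso Y').hom = (hd.HheartIso Y).hom ≫ f := by
  have h1 := (shiftFunctorZero D ℤ).hom.naturality (hd.ι.map f)
  have h2 := hd.heartIso.hom.naturality f
  dsimp at h1 h2
  show hd.H0.map _ ≫ hd.H0.map ((shiftFunctorZero D ℤ).hom.app _) ≫ hd.heartIso.hom.app Y' =
    (hd.H0.map ((shiftFunctorZero D ℤ).hom.app _) ≫ hd.heartIso.hom.app Y) ≫ f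
  rw [← Functor.map_comp_assoc, h1, Functor.map_comp_assoc, h2]
  simp

lemma HeartData.kernel_cokernel_mem {E : Set D} (hE : IsThick E) (hdet : IsHomDet hd E)
    {Y Y' : A} (f : Y ⟶ Y') (hY : hd.ι.obj Y ∈ E) (hY' : hd.ι.obj Y' ∈ E) :
    hd.ι.obj (kernel f) ∈ E ∧ hd.ι.obj (cokernel f) ∈ E := by
  have := hd.homological
  letI : hd.H0.ShiftSequence ℤ := Functor.ShiftSequence.tautological _ _
  obtain ⟨Z, g, h, mem⟩ := Pretriangulated.distinguished_cocone_triangle (hd.ι.map f)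
  have hZ : Z ∈ E := hE.ext _ (rot_of_distTriang _ mem) hY' (hE.shift 1 hY)
  have hHZ : ∀ k : ℤ, hd.ι.obj (hd.H k Z) ∈ E := by
    intro k
    have h1 := (hdet Z).1 hZ k
    have h2 := hE.shift k h1
    exact hE.mem_of_iso ((shiftFunctorCompIsoId D (-k) k (by omega)).app _) h2
  have z1 : IsZero (hd.H (-1) (hd.ι.obj Y')) := hd.isZero_H_heart Y' (-1) (by omega)
  have z2 : IsZero (hd.H 1 (hd.ι.obj Y)) := hd.isZero_H_heart Y 1 (by omega)
  have e1 := hd.H0.homologySequence_exact₃ (Triangle.mk (hd.ι.map f) g h) mem (-1) 0 (by omega)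
  have e2 := hd.H0.homologySequence_exact₁ (Triangle.mk (hd.ι.map f) g h) mem (-1) 0 (by omega)
  have e3 := hd.H0.homologySequence_exact₂ (Triangle.mk (hd.ι.map f) g h) mem 0
  have e4 := hd.H0.homologySequence_exact₃ (Triangle.mk (hd.ι.map f) g h) mem 0 1 rfl
  obtain ⟨ek⟩ := kernel_iso_of_exact e1 e2 z1
  obtain ⟨ec⟩ := cokernel_iso_of_exact e3 e4 z2
  have hker : kernel ((hd.H0.shift (0 : ℤ)).map (Triangle.mk (hd.ι.map f) g h).mor₁) ≅ kernel f :=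
    kernel.mapIso _ f (hd.HheartIso Y) (hd.HheartIso Y') (hd.heart_comm f)
  have hcoker : cokernel ((hd.H0.shift (0 : ℤ)).map (Triangle.mk (hd.ι.map f) g h).mor₁)
      ≅ cokernel f :=
    cokernel.mapIso _ f (hd.HheartIso Y) (hd.HheartIso Y') (hd.heart_comm f)
  constructor
  · exact hE.mem_of_iso (hd.ι.mapIso (ek ≪≫ hker)) (hHZ (-1))
  · exact hE.mem_of_iso (hd.ι.mapIso (ec.symm ≪≫ hcoker)) (hHZ 0)

lemma HeartData.theta_thick {W : Set A} (hW : IsWide W) :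
    IsThick {X : D | ∀ k : ℤ, hd.H k X ∈ W} := by
  constructor
  · intro X Y e hX k
    exact hW.subcat.mem_of_iso (hd.HmapIso k e) (hX k)
  · intro k
    exact hW.subcat.mem_of_isZero (hd.isZero_H_of_isZero (isZero_zero D) k)
  · intro T hT h₁ h₃ k
    exact hd.theta_ext hW T hT h₁ h₃ k
  · intro X n hX k
    exact hW.subcat.mem_of_iso (hd.HshiftIso n k (n + k) rfl X).symm (hX (n + k))
  · intro X Y i r hir hY k
    refine hW.retract (hd.H0.map (i⟦k⟧')) (hd.H0.map (r⟦k⟧')) ?_ (hY k)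
    change hd.H0.map (i⟦k⟧') ≫ hd.H0.map (r⟦k⟧') = 𝟙 (hd.H0.obj (X⟦k⟧))
    rw [← Functor.map_comp, ← Functor.map_comp, hir, CategoryTheory.Functor.map_id,
      CategoryTheory.Functor.map_id]

lemma HeartData.theta_homdet {W : Set A} (hW : IsWide W) :
    IsHomDet hd {X : D | ∀ k : ℤ, hd.H k X ∈ W} := by
  intro X
  constructor
  · intro hX k
    show (hd.ι.obj (hd.H k X))⟦(-k : ℤ)⟧ ∈ {X : D | ∀ k : ℤ, hd.H k X ∈ W}
    intro j
    by_cases hjk : j = k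
    · subst hjk
      exact hW.subcat.mem_of_iso (hd.HshiftHeartIso (hd.H j X) j).symm (hX j)
    · exact hW.subcat.mem_of_isZero (hd.isZero_HshiftHeart _ k j hjk)
  · intro hk
    intro k
    have h2 : hd.H k ((hd.ι.obj (hd.H k X))⟦(-k : ℤ)⟧) ∈ W := hk k k
    exact hW.subcat.mem_of_iso (hd.HshiftHeartIso _ k) h2

lemma HeartData.HkSet_theta {W : Set A} (hW : IsWide W) :
    HkSet hd {X : D | ∀ k : ℤ, hd.H k X ∈ W} 0 = W := by
  ext Y
  constructor
  · rintro ⟨X, hX, ⟨e⟩⟩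
    exact hW.subcat.mem_of_iso e.symm (hX 0)
  · intro hY
    refine ⟨hd.ι.obj Y, ?_, ⟨(hd.HheartIso Y).symm⟩⟩
    intro k
    by_cases hk : k = 0
    · subst hk
      exact hW.subcat.mem_of_iso (hd.HheartIso Y).symm hY
    · exact hW.subcat.mem_of_isZero (hd.isZero_H_heart Y k hk)

lemma HeartData.HkSet_eq_preimage {E : Set D} (hE : IsThick E) (hdet : IsHomDet hd E) :
    HkSet hd E 0 = {Y : A | hd.ι.obj Y ∈ E} := by
  ext Y
  constructor
  · rintro ⟨X, hX, ⟨e⟩⟩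
    have h1 := (hdet X).1 hX 0
    have h2 : hd.ι.obj (hd.H 0 X) ∈ E :=
      hE.mem_of_iso ((shiftFunctorZero' D (-0 : ℤ) neg_zero).app _) h1
    exact hE.mem_of_iso (hd.ι.mapIso e.symm) h2
  · intro hY
    exact ⟨hd.ι.obj Y, hY, ⟨(hd.HheartIso Y).symm⟩⟩

lemma HeartData.wide_preimage {E : Set D} (hE : IsThick E) (hdet : IsHomDet hd E) :
    IsWide {Y : A | hd.ι.obj Y ∈ E} := by
  have := hd.additive
  constructor
  · constructor
    · intro X Y e hX
      exact hE.mem_of_iso (hd.ι.mapIso e) hX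
    · exact hE.mem_of_iso (hd.ι.map_isZero (isZero_zero A)).isoZero.symm hE.zero_mem
    · intro X Y hX hY
      haveI : PreservesBinaryBiproducts hd.ι :=
        preservesBinaryBiproducts_of_preservesBiproducts _
      have hb : (hd.ι.obj X ⊞ hd.ι.obj Y) ∈ E :=
        hE.ext _ (binaryBiproductTriangle_distinguished (hd.ι.obj X) (hd.ι.obj Y)) hX hY
      exact hE.mem_of_iso (hd.ι.mapBiprod X Y).symm hb
  · intro S hS h₁ h₃
    obtain ⟨h', mem⟩ := (hd.shortExact_iff S).1 hS
    exact hE.ext _ mem h₁ h₃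
  · intro X Y f hX hY
    exact (hd.kernel_cokernel_mem hE hdet f hX hY).1
  · intro X Y f hX hY
    exact (hd.kernel_cokernel_mem hE hdet f hX hY).2

lemma HeartData.theta_preimage {E : Set D} (hE : IsThick E) (hdet : IsHomDet hd E) :
    {X : D | ∀ k : ℤ, hd.H k X ∈ HkSet hd E 0} = E := by
  rw [hd.HkSet_eq_preimage hE hdet]
  ext X
  simp only [Set.mem_setOf_eq]
  constructor
  · intro hk
    rw [hdet X]
    intro k
    show (hd.ι.obj (hd.H k X))⟦(-k : ℤ)⟧ ∈ E
    exact hE.shift (-k) (hk k)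
  · intro hX k
    have h1 := (hdet X).1 hX k
    have h2 := hE.shift k h1
    exact hE.mem_of_iso ((shiftFunctorCompIsoId D (-k) k (by omega)).app _) h2

lemma HeartData.mem_of_bounded_aux {E : Set D} (hE : IsThick E) :
    ∀ (d : ℕ) (X : D) (n m : ℤ), t.le n X → t.ge m X → (n + 1 - m).toNat ≤ d →
      (∀ k : ℤ, (hd.ι.obj (hd.H k X))⟦(-k : ℤ)⟧ ∈ E) → X ∈ E := by
  intro d
  induction d with
  | zero =>
    intro X n m hn hm hle _
    exact hE.mem_of_isZero (t_isZero t n m (by omega) hn hm)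
  | succ d ih =>
    intro X n m hn hm hle hk
    by_cases hnm : n < m
    · exact hE.mem_of_isZero (t_isZero t n m hnm hn hm)
    · push_neg at hnm
      obtain ⟨Aq, B, hA, hB, f, g, h, mem⟩ := t.exists_triangle X (n - 1) n (by omega)
      have hBLE : t.le n B :=
        t_LE_ext t _ (rot_of_distTriang _ mem) n hn
          (t.le_monotone (show (n - 2 : ℤ) ≤ n by omega) _
            (t.le_shift (n - 1) 1 (n - 2) (by omega) Aq hA))
      have hBGE0 : t.ge 0 (B⟦n⟧) := t.ge_shift n n 0 (by omega) B hB
      have hBLE0 : t.le 0 (B⟦n⟧) := t.le_shift n n 0 (by omega) B hBLE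
      obtain ⟨Yb, ⟨eYb⟩⟩ := hd.heart_mem (B⟦n⟧) ⟨hBLE0, hBGE0⟩
      obtain ⟨i3⟩ := hd.H_iso₂₃ (Triangle.mk f g h) mem n
        (hd.LE_vanish Aq (n - 1) n hA (by omega)) (hd.LE_vanish Aq (n - 1) (n + 1) hA (by omega))
      have yb : Yb ≅ hd.H n X :=
        (hd.HheartIso Yb).symm ≪≫ hd.HmapIso 0 eYb ≪≫ hd.HshiftIso n 0 n (by omega) B
          ≪≫ i3.symm
      have hBmem : B ∈ E := by
        refine hE.mem_of_iso ?_ (hk n)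
        exact (shiftFunctor D (-n)).mapIso (hd.ι.mapIso yb.symm) ≪≫
          (shiftFunctor D (-n)).mapIso eYb ≪≫ (shiftFunctorCompIsoId D n (-n) (by omega)).app B
      have hAGE : t.ge m Aq := t_GE_ext t _ (inv_rot_of_distTriang _ mem) m
        (t.ge_antitone (show m ≤ n + 1 by omega) _ (t.ge_shift n (-1) (n + 1) (by omega) B hB)) hm
      have hkA : ∀ k : ℤ, (hd.ι.obj (hd.H k Aq))⟦(-k : ℤ)⟧ ∈ E := by
        intro k
        by_cases hkn : k < n
        · obtain ⟨iA⟩ := hd.H_iso₁₂ (Triangle.mk f g h) mem k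
            (hd.GE_vanish B n (k - 1) hB (by omega)) (hd.GE_vanish B n k hB (by omega))
          exact hE.mem_of_iso ((shiftFunctor D (-k)).mapIso (hd.ι.mapIso iA.symm)) (hk k)
        · push_neg at hkn
          have hz : IsZero (hd.H k Aq) := hd.LE_vanish Aq (n - 1) k hA (by omega)
          have := hd.additive
          exact hE.mem_of_isZero ((shiftFunctor D (-k)).map_isZero (hd.ι.map_isZero hz))
      have hAmem : Aq ∈ E := ih Aq (n - 1) m hA hAGE (by omega) hkA
      exact hE.ext _ mem hAmem hBmem

lemma HeartData.H0stable_of_homdet {E : Set D} (hE : IsThick E) (hdet : IsHomDet hd E) :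
    H0Stable hd E := by
  intro X hX
  have h1 := (hdet X).1 hX 0
  exact hE.mem_of_iso ((shiftFunctorZero' D (-0 : ℤ) neg_zero).app _) h1

lemma HeartData.homdet_of_H0stable (hb : BoundedT t) {E : Set D} (hE : IsThick E)
    (hstab : H0Stable hd E) : IsHomDet hd E := by
  intro X
  constructor
  · intro hX k
    show (hd.ι.obj (hd.H k X))⟦(-k : ℤ)⟧ ∈ E
    have h1 : X⟦k⟧ ∈ E := hE.shift k hX
    have h2 := hstab _ h1
    have e : hd.H 0 (X⟦k⟧) ≅ hd.H k X := hd.HshiftIso k 0 k (by omega) X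
    exact hE.shift (-k) (hE.mem_of_iso (hd.ι.mapIso e) h2)
  · intro hk
    obtain ⟨⟨n, hn⟩, ⟨m, hm⟩⟩ := hb X
    exact hd.mem_of_bounded_aux hE ((n + 1 - m).toNat) X n m hn hm le_rfl hk

end HeartAux

/-- **Corollary.** Wide subcategories of the heart `H` are in bijection with
homology-determined thick subcategories of `D`, via `W ↦ {X ∈ D ∣ H^k X ∈ W for all k}` with
inverse `E ↦ H⁰ E`. Moreover, if the t-structure is bounded, then the homology-determined
thick subcategories are exactly the `H⁰`-stable thick subcategories. -/
theorem wideSubcats_equiv_homDetThick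
    {D : Type*} [Category D] [Preadditive D] [HasZeroObject D] [HasShift D ℤ]
    [∀ n : ℤ, (shiftFunctor D n).Additive] [Pretriangulated D]
    {t : Triangulated.TStructure D} {A : Type*} [Category A] [Abelian A]
    (hd : HeartData t A) :
    (∃ e : {W : Set A // IsWide W} ≃ {E : Set D // IsThick E ∧ IsHomDet hd E},
      (∀ W, (e W).1 = {X : D | ∀ k : ℤ, hd.H k X ∈ W.1}) ∧
        (∀ E, (e.symm E).1 = HkSet hd E.1 0)) ∧
      (BoundedT t → ∀ E : Set D, IsThick E → (IsHomDet hd E ↔ H0Stable hd E)) := by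
  constructor
  · refine ⟨⟨fun W => ⟨{X : D | ∀ k : ℤ, hd.H k X ∈ W.1},
      hd.theta_thick W.2, hd.theta_homdet W.2⟩,
      fun E => ⟨HkSet hd E.1 0, by
        rw [hd.HkSet_eq_preimage E.2.1 E.2.2]
        exact hd.wide_preimage E.2.1 E.2.2⟩,
      fun W => Subtype.ext (hd.HkSet_theta W.2),
      fun E => Subtype.ext (hd.theta_preimage E.2.1 E.2.2)⟩,
      fun W => rfl, fun E => rfl⟩
  · intro hb E hE
    exact ⟨fun hdet => hd.H0stable_of_homdet hE hdet,
      fun hstab => hd.homdet_of_H0stable hb hE hstab⟩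


end ICEPaper
end

section
/- If the t-structure (D^{≤0}, D^{≥1}) is nondegenerate, then every intermediate preaisle in D is homology-determined. -/
open CategoryTheory Limits ZeroObject

namespace ICEPaper

open Pretriangulated Triangulated

variable {D : Type*} [Category D] [Preadditive D] [HasZeroObject D] [HasShift D ℤ]
  [∀ n : ℤ, (shiftFunctor D n).Additive] [Pretriangulated D]

variable (t : TStructure D)

variable {t} {A : Type*} [Category A] [Abelian A] (hd : HeartData t A)

section AuxLemmas

lemma aux_isZero_shift {X : D} (a : ℤ) (h : IsZero X) : IsZero (X⟦a⟧) := by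
  rw [IsZero.iff_id_eq_zero] at h ⊢
  rw [← CategoryTheory.Functor.map_id, h, CategoryTheory.Functor.map_zero]

lemma aux_shift_isZero {X : D} (a : ℤ) (h : IsZero (X⟦a⟧)) : IsZero X := by
  rw [IsZero.iff_id_eq_zero] at h ⊢
  apply (shiftFunctor D a).map_injective
  rw [CategoryTheory.Functor.map_id, CategoryTheory.Functor.map_zero]
  exact h

lemma aux_zero_map {X Y : D} (f : X ⟶ Y) {a b : ℤ} (hX : t.le a X) (hY : t.ge b Y)
    (hab : a < b) : f = 0 := by
  have h1 : t.le 0 (X⟦a⟧) := t.le_shift a a 0 (by omega) X hX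
  have h2 : t.ge (b - a) (Y⟦a⟧) := t.ge_shift b a (b - a) (by omega) Y hY
  have h3 : t.ge 1 (Y⟦a⟧) := t.ge_antitone (by omega : (1:ℤ) ≤ b - a) _ h2
  have h4 := t.zero' ((shiftFunctor D a).map f) h1 h3
  apply (shiftFunctor D a).map_injective
  rw [h4, CategoryTheory.Functor.map_zero]

lemma aux_isZero_of_le_ge {X : D} {a b : ℤ} (hX1 : t.le a X) (hX2 : t.ge b X)
    (hab : a < b) : IsZero X := by
  rw [IsZero.iff_id_eq_zero]
  exact aux_zero_map (𝟙 X) hX1 hX2 hab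

lemma aux_LE_orth {X : D} {n : ℤ}
    (h : ∀ (Y : D), t.ge (n + 1) Y → ∀ f : X ⟶ Y, f = 0) : t.le n X := by
  obtain ⟨A₀, B, hA₀, hB, u, v, w, mem⟩ := t.exists_triangle X n (n + 1) rfl
  have hv : v = 0 := h B hB v
  obtain ⟨r, hr⟩ := Triangle.yoneda_exact₃ _ mem (𝟙 B) (by
    show v ≫ 𝟙 B = 0; rw [hv, zero_comp])
  have hr0 : r = 0 :=
    aux_zero_map r (t.le_shift n 1 (n - 1) (by omega) A₀ hA₀) hB (by omega)
  have hBzero : IsZero B := by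
    rw [IsZero.iff_id_eq_zero, hr, hr0, comp_zero]
    rfl
  have : IsIso u := (Triangle.isZero₃_iff_isIso₁ _ mem).1 hBzero
  exact (t.le n).prop_of_iso (asIso u) hA₀

lemma aux_LE_ext (T : Triangle D) (hT : T ∈ distTriang D) {n : ℤ}
    (hh₁ : t.le n T.obj₁) (hh₃ : t.le n T.obj₃) : t.le n T.obj₂ := by
  apply aux_LE_orth
  intro Y hY f
  have h1 : T.mor₁ ≫ f = 0 := aux_zero_map _ hh₁ hY (by omega)
  obtain ⟨g, hg⟩ := Triangle.yoneda_exact₂ _ hT f h1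
  rw [hg, aux_zero_map g hh₃ hY (by omega), comp_zero]

lemma aux_GE_orth {Y : D} {n : ℤ}
    (h : ∀ (X : D), t.le (n - 1) X → ∀ f : X ⟶ Y, f = 0) : t.ge n Y := by
  obtain ⟨A₀, B, hA₀, hB, u, v, w, mem⟩ := t.exists_triangle Y (n - 1) n (by omega)
  have hu : u = 0 := h A₀ hA₀ u
  obtain ⟨r, hr⟩ := Triangle.coyoneda_exact₁ _ mem (𝟙 (A₀⟦(1:ℤ)⟧)) (by
    show 𝟙 _ ≫ (shiftFunctor D (1:ℤ)).map u = 0; rw [hu, CategoryTheory.Functor.map_zero, comp_zero])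
  have hr0 : r = 0 :=
    aux_zero_map r (t.le_shift (n - 1) 1 (n - 2) (by omega) A₀ hA₀) hB (by omega)
  have hAzero : IsZero A₀ := by
    apply aux_shift_isZero (1 : ℤ)
    rw [IsZero.iff_id_eq_zero, hr, hr0, zero_comp]
    rfl
  have : IsIso v := (Triangle.isZero₁_iff_isIso₂ _ mem).1 hAzero
  exact (t.ge n).prop_of_iso (asIso v).symm hB

lemma aux_GE_ext (T : Triangle D) (hT : T ∈ distTriang D) {n : ℤ}
    (hh₁ : t.ge n T.obj₁) (hh₃ : t.ge n T.obj₃) : t.ge n T.obj₂ := by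
  apply aux_GE_orth
  intro X hX f
  have h1 : f ≫ T.mor₂ = 0 := aux_zero_map _ hX hh₃ (by omega)
  obtain ⟨g, hg⟩ := Triangle.coyoneda_exact₂ _ hT f h1
  rw [hg, aux_zero_map g hX hh₁ (by omega), zero_comp]

lemma aux_isZero_iota {Y : A} (h : IsZero Y) :
    IsZero (hd.ι.obj Y) := by
  haveI := hd.additive
  rw [IsZero.iff_id_eq_zero] at h ⊢
  rw [← hd.ι.map_id, h, CategoryTheory.Functor.map_zero]

lemma aux_isZero_of_iota {Y : A} (h : IsZero (hd.ι.obj Y)) :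
    IsZero Y := by
  haveI := hd.additive
  haveI := hd.faithful
  rw [IsZero.iff_id_eq_zero] at h ⊢
  apply hd.ι.map_injective
  rw [CategoryTheory.Functor.map_id, CategoryTheory.Functor.map_zero]
  exact h

/-- For `X ∈ D^{≤0}`, there is a distinguished triangle `A₀ → X → ι(H⁰X)` with
`A₀ ∈ D^{≤-1}`. -/
lemma aux_triangle_H0 {X : D} (hX : t.le 0 X) :
    ∃ (T : Triangle D), T ∈ (distTriang D) ∧ t.le (-1) T.obj₁ ∧ T.obj₂ = X ∧
      Nonempty (T.obj₃ ≅ hd.ι.obj (hd.H0.obj X)) := by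
  haveI := hd.homological
  obtain ⟨A₀, B, hA₀, hB, u, v, w, mem⟩ := t.exists_triangle X (-1) 0 (by omega)
  refine ⟨Triangle.mk u v w, mem, hA₀, rfl, ?_⟩
  have hBLE : t.le 0 B := by
    refine aux_LE_ext _ (rot_of_distTriang _ mem) (show t.le 0 X from hX) ?_
    exact t.le_monotone (show (-2:ℤ) ≤ 0 by omega) _
      (t.le_shift (-1) 1 (-2) (by omega) A₀ hA₀)
  obtain ⟨Y, ⟨e⟩⟩ := hd.heart_mem B ⟨hBLE, hB⟩
  have hA0zero : IsZero (hd.H0.obj A₀) :=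
    IsZero.of_iso (hd.LE_vanish A₀ (-1) 0 hA₀ (by omega))
      (hd.H0.mapIso ((shiftFunctorZero D ℤ).app A₀).symm)
  have hmono : Mono (hd.H0.map v) := by
    have hex := hd.H0.map_distinguished_exact _ mem
    exact hex.mono_g (hA0zero.eq_of_src _ _)
  have hepi : Epi (hd.H0.map v) := by
    have hex := hd.H0.map_distinguished_exact _ (rot_of_distTriang _ mem)
    have hz : IsZero (hd.H0.obj (A₀⟦(1:ℤ)⟧)) := hd.LE_vanish A₀ (-1) 1 hA₀ (by omega)
    exact hex.epi_f (hz.eq_of_tgt _ _)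
  haveI : IsIso (hd.H0.map v) := isIso_of_mono_of_epi _
  exact ⟨e.symm ≪≫ hd.ι.mapIso
    ((hd.heartIso.app Y).symm ≪≫ hd.H0.mapIso e ≪≫ (asIso (hd.H0.map v)).symm)⟩

/-- Nondegeneracy: if `H^k X = 0` for all `k ≥ 1`, then `X ∈ D^{≤0}`. -/
lemma aux_LE_zero_of_vanish (hnd : NonDegenerateT t) {X : D}
    (hv : ∀ k : ℤ, 1 ≤ k → IsZero (hd.H0.obj (X⟦k⟧))) : t.le 0 X := by
  haveI := hd.homological
  obtain ⟨A₀, B, hA₀, hB, u, v, w, mem⟩ := t.exists_triangle X 0 1 rfl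
  have hvB : ∀ m : ℤ, 1 ≤ m → IsZero (hd.H0.obj (B⟦m⟧)) := by
    intro m hm
    have hshift := Triangle.shift_distinguished _ mem m
    have hex := hd.H0.map_distinguished_exact _ (rot_of_distTriang _ hshift)
    refine hex.isZero_of_both_zeros ((hv m hm).eq_of_src _ _) (IsZero.eq_of_tgt ?_ _ _)
    exact IsZero.of_iso (hd.LE_vanish A₀ 0 (m + 1) hA₀ (by omega))
      (hd.H0.mapIso (((shiftFunctorAdd' D m 1 (m + 1) rfl).app A₀).symm))
  have hGEall : ∀ n : ℤ, t.ge n B := by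
    have step : ∀ m : ℤ, 1 ≤ m → t.ge m B → t.ge (m + 1) B := by
      intro m hm hGEm
      obtain ⟨A', B', hA', hB', u', v', w', mem'⟩ := t.exists_triangle B m (m + 1) rfl
      have hinv := inv_rot_of_distTriang _ mem'
      have hobj1 : t.ge m (B'⟦(-1:ℤ)⟧) :=
        t.ge_antitone (by omega : m ≤ m + 2) _
          (t.ge_shift (m + 1) (-1) (m + 2) (by omega) B' hB')
      have hA'GE : t.ge m A' := aux_GE_ext _ hinv hobj1 hGEm
      have hLEh : t.le 0 (A'⟦m⟧) := t.le_shift m m 0 (by omega) A' hA'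
      have hGEh : t.ge 0 (A'⟦m⟧) := t.ge_shift m m 0 (by omega) A' hA'GE
      have hz : IsZero (hd.H0.obj (A'⟦m⟧)) := by
        have hshift := Triangle.shift_distinguished _ hinv m
        have hex := hd.H0.map_distinguished_exact _ hshift
        refine hex.isZero_of_both_zeros (IsZero.eq_of_src ?_ _ _)
          ((hvB m hm).eq_of_tgt _ _)
        exact IsZero.of_iso (hd.GE_vanish B' (m + 1) (-1 + m) hB' (by omega))
          (hd.H0.mapIso (((shiftFunctorAdd' D (-1) m (-1 + m) rfl).app B').symm))
      obtain ⟨Y, ⟨e⟩⟩ := hd.heart_mem (A'⟦m⟧) ⟨hLEh, hGEh⟩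
      have hY : IsZero Y :=
        IsZero.of_iso (IsZero.of_iso hz (hd.H0.mapIso e)) (hd.heartIso.app Y).symm
      have hA'z : IsZero A' :=
        aux_shift_isZero m (IsZero.of_iso (aux_isZero_iota hd hY) e.symm)
      have : IsIso v' := (Triangle.isZero₁_iff_isIso₂ _ mem').1 hA'z
      exact (t.ge (m + 1)).prop_of_iso (asIso v').symm hB'
    have hind : ∀ j : ℕ, t.ge (1 + j) B := by
      intro j
      induction j with
      | zero => simpa using hB
      | succ j ih =>
          have h' := step (1 + (j : ℤ)) (by omega) ih
          have hcast : (1 : ℤ) + ((j + 1 : ℕ) : ℤ) = 1 + (j : ℤ) + 1 := by push_cast; ring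
          rw [hcast]
          exact h'
    intro n
    by_cases hn : n ≤ 1
    · exact t.ge_antitone hn _ hB
    · have h' := hind (n - 1).toNat
      have hcast : (1 : ℤ) + ((n - 1).toNat : ℤ) = n := by omega
      rw [hcast] at h'
      exact h'
  have hBzero : IsZero B := hnd.2 B hGEall
  have : IsIso u := (Triangle.isZero₃_iff_isIso₁ _ mem).1 hBzero
  exact (t.le 0).prop_of_iso (asIso u) hA₀

end AuxLemmas

/-- **Proposition.** If the t-structure is nondegenerate, then every intermediate preaisle
(`D^{≤-1} ⊆ U ⊆ D^{≤0}`) in `D` is homology-determined. -/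
theorem isHomDet_of_intermediate_preaisle
    {D : Type*} [Category D] [Preadditive D] [HasZeroObject D] [HasShift D ℤ]
    [∀ n : ℤ, (shiftFunctor D n).Additive] [Pretriangulated D]
    {t : Triangulated.TStructure D} {A : Type*} [Category A] [Abelian A]
    (hd : HeartData t A) (hnd : NonDegenerateT t)
    {U : Set D} (hU : IsPreaisle U) (h₁ : DLE t (-1) ⊆ U) (h₂ : U ⊆ DLE t 0) :
    IsHomDet hd U := by
  haveI := hd.homological
  intro X
  have zeroIso : ∀ Z : D, (Z⟦(-(0:ℤ))⟧ : D) ≅ Z := fun Z =>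
    (shiftFunctorZero' D (-(0:ℤ)) neg_zero).app Z
  constructor
  · intro hXU k
    show (hd.ι.obj (hd.H0.obj (X⟦k⟧)))⟦(-k)⟧ ∈ U
    rcases lt_trichotomy k 0 with hk | rfl | hk
    · have hheart := hd.mem_heart (hd.H0.obj (X⟦k⟧))
      have hLE : t.le k ((hd.ι.obj (hd.H0.obj (X⟦k⟧)))⟦(-k)⟧) :=
        t.le_shift 0 (-k) k (by omega) _ hheart.1
      exact h₁ (t.le_monotone (by omega : k ≤ -1) _ hLE)
    · obtain ⟨T, hT, hT1, hT2, ⟨e⟩⟩ := aux_triangle_H0 hd (h₂ hXU)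
      have hB : T.obj₃ ∈ U := by
        refine hU.ext _ (rot_of_distTriang _ hT) ?_ ?_
        · show T.obj₂ ∈ U
          exact hT2 ▸ hXU
        · exact h₁ (t.le_monotone (by omega : (-2:ℤ) ≤ -1) _
            (t.le_shift (-1) 1 (-2) (by omega) T.obj₁ hT1))
      have h0 : hd.ι.obj (hd.H0.obj X) ∈ U := hU.mem_of_iso e hB
      refine hU.mem_of_iso (Iso.symm ?_) h0
      exact zeroIso _ ≪≫ hd.ι.mapIso (hd.H0.mapIso ((shiftFunctorZero D ℤ).app X))
    · have hz : IsZero (hd.H0.obj (X⟦k⟧)) := hd.LE_vanish X 0 k (h₂ hXU) hk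
      have hz2 : IsZero ((hd.ι.obj (hd.H0.obj (X⟦k⟧)))⟦(-k)⟧) :=
        aux_isZero_shift (-k) (aux_isZero_iota hd hz)
      exact hU.mem_of_iso hz2.isoZero.symm hU.zero_mem
  · intro hk
    have hzero : ∀ m : ℤ, 1 ≤ m → IsZero (hd.H0.obj (X⟦m⟧)) := by
      intro m hm
      have h := hk m
      have hLE : t.le 0 ((hd.ι.obj (hd.H0.obj (X⟦m⟧)))⟦(-m)⟧) := h₂ h
      have hGE : t.ge m ((hd.ι.obj (hd.H0.obj (X⟦m⟧)))⟦(-m)⟧) :=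
        t.ge_shift 0 (-m) m (by omega) _ (hd.mem_heart _).2
      have hzz := aux_isZero_of_le_ge hLE hGE (by omega : (0:ℤ) < m)
      exact aux_isZero_of_iota hd (aux_shift_isZero (-m) hzz)
    have hXLE : t.le 0 X := aux_LE_zero_of_vanish hd hnd hzero
    obtain ⟨T, hT, hT1, hT2, ⟨e⟩⟩ := aux_triangle_H0 hd hXLE
    have h0 : hd.ι.obj (hd.H0.obj X) ∈ U := by
      have hmem := hk 0
      refine hU.mem_of_iso ?_ hmem
      exact zeroIso _ ≪≫ hd.ι.mapIso (hd.H0.mapIso ((shiftFunctorZero D ℤ).app X))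
    have hobj3 : T.obj₃ ∈ U := hU.mem_of_iso e.symm h0
    have hmid := hU.ext T hT (h₁ hT1) hobj3
    exact hT2 ▸ hmid

end ICEPaper
end

section
/- For any abelian category A, there is a bijective correspondence between the set of ICE sequences in A of length 2 and the set of torsion classes in A, given by {C(k)}_{k∈ℤ} ↦ C(0). -/
open CategoryTheory Limits ZeroObject

namespace ICEPaper

variable {A : Type*} [Category A] [Abelian A]

section Aux

variable {A : Type*} [Category A] [Abelian A]

lemma isSubcat_univ : IsSubcat (Set.univ : Set A) :=
  ⟨fun _ _ _ _ => trivial, trivial, fun _ _ _ _ => trivial⟩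

lemma mem_zeroSubcat {X : A} : X ∈ (zeroSubcat : Set A) ↔ IsZero X := Iff.rfl

lemma isSubcat_zero : IsSubcat (zeroSubcat : Set A) where
  mem_of_iso := fun _ _ e hX => hX.of_iso e.symm
  zero_mem := isZero_zero A
  biprod_mem := fun X Y hX hY => (biprod_isZero_iff X Y).2 ⟨hX, hY⟩

lemma isZero_of_shortExact {S : ShortComplex A} (hS : S.ShortExact)
    (h1 : IsZero S.X₁) (h3 : IsZero S.X₃) : IsZero S.X₂ := by
  have hg : S.g = 0 := h3.eq_of_tgt _ _
  have hepi : Epi S.f := (S.exact_iff_epi hg).1 hS.exact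
  exact IsZero.of_epi_eq_zero S.f (h1.eq_of_src _ _)

lemma ext_zero : ClosedUnderExtensions (zeroSubcat : Set A) :=
  fun _ hS h1 h3 => isZero_of_shortExact hS h1 h3

lemma alphaSub_univ : alphaSub (Set.univ : Set A) = Set.univ := by
  ext X
  exact ⟨fun _ => trivial, fun _ => ⟨trivial, fun _ _ _ => trivial⟩⟩

lemma iceClosed_univ : IsICEClosed (Set.univ : Set A) :=
  ⟨isSubcat_univ, fun _ _ _ _ _ => trivial, fun _ _ _ _ _ => trivial,
    fun _ _ _ _ => trivial⟩

lemma iceClosed_zero : IsICEClosed (zeroSubcat : Set A) where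
  subcat := isSubcat_zero
  im := fun X Y f _ hY => IsZero.of_mono_eq_zero (image.ι f) (hY.eq_of_tgt _ _)
  coker := fun X Y f _ hY => IsZero.of_epi_eq_zero (cokernel.π f) (hY.eq_of_src _ _)
  ext := ext_zero

lemma iceClosed_of_torsionClass {T : Set A} (hT : IsTorsionClass T) : IsICEClosed T where
  subcat := hT.subcat
  im := fun X Y f hX _ => hT.quot (factorThruImage f) inferInstance hX
  coker := fun X Y f _ hY => hT.quot (cokernel.π f) inferInstance hY
  ext := hT.ext

lemma tcIn_alpha_univ_of_torsionClass {T : Set A} (hT : IsTorsionClass T) :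
    IsTorsionClassIn (alphaSub (Set.univ : Set A)) T := by
  rw [alphaSub_univ]
  exact ⟨fun _ _ => trivial, hT.subcat, hT.ext, fun X Y f hf hX _ => hT.quot f hf hX⟩

lemma tcIn_alpha_univ_univ : IsTorsionClassIn (alphaSub (Set.univ : Set A)) Set.univ := by
  rw [alphaSub_univ]
  exact ⟨fun _ _ => trivial, isSubcat_univ, fun _ _ _ _ => trivial,
    fun _ _ _ _ _ _ => trivial⟩

lemma tcIn_alpha_zero_zero : IsTorsionClassIn (alphaSub (zeroSubcat : Set A)) zeroSubcat where
  subset := fun X hX => ⟨hX, fun C' f hC' =>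
    IsZero.of_mono_eq_zero (kernel.ι f) (hC'.eq_of_tgt _ _)⟩
  subcat := isSubcat_zero
  ext := ext_zero
  quot := fun X Y f hf hX _ => IsZero.of_epi_eq_zero f (hX.eq_of_src _ _)

lemma tcIn_alpha_tors_zero {T : Set A} (hT : IsTorsionClass T) :
    IsTorsionClassIn (alphaSub T) (zeroSubcat : Set A) where
  subset := fun X hX => by
    refine ⟨hT.subcat.mem_of_iso hX.isoZero.symm hT.subcat.zero_mem, fun C' f hC' => ?_⟩
    have hf : f = 0 := hX.eq_of_tgt _ _
    subst hf
    exact hT.subcat.mem_of_iso kernelZeroIsoSource.symm hC'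
  subcat := isSubcat_zero
  ext := ext_zero
  quot := fun X Y f hf hX _ => IsZero.of_epi_eq_zero f (hX.eq_of_src _ _)

/-- The ICE sequence of length 2 associated to a torsion class. -/
def torsSeq (T : Set A) : ℤ → Set A := fun k =>
  if 1 ≤ k then zeroSubcat else if k = 0 then T else Set.univ

lemma torsSeq_of_one_le (T : Set A) {k : ℤ} (h : 1 ≤ k) : torsSeq T k = zeroSubcat := by
  simp [torsSeq, h]

lemma torsSeq_zero (T : Set A) : torsSeq T 0 = T := by simp [torsSeq]

lemma torsSeq_of_neg (T : Set A) {k : ℤ} (h : k ≤ -1) : torsSeq T k = Set.univ := by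
  have h1 : ¬ (1 ≤ k) := by omega
  have h2 : k ≠ 0 := by omega
  simp [torsSeq, h1, h2]

lemma torsSeq_isICESequence {T : Set A} (hT : IsTorsionClass T) :
    IsICESequence (torsSeq T) where
  ice := fun k => by
    rcases le_or_gt 1 k with h | h
    · rw [torsSeq_of_one_le T h]; exact iceClosed_zero
    · rcases eq_or_lt_of_le (by omega : k ≤ 0) with h0 | h0
      · rw [h0, torsSeq_zero]; exact iceClosed_of_torsionClass hT
      · rw [torsSeq_of_neg T (by omega)]; exact iceClosed_univ
  tors := fun k => by
    rcases le_or_gt 1 k with h | h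
    · rw [torsSeq_of_one_le T h, torsSeq_of_one_le T (by omega)]
      exact tcIn_alpha_zero_zero
    · rcases eq_or_lt_of_le (by omega : k ≤ 0) with h0 | h0
      · rw [h0, torsSeq_zero, torsSeq_of_one_le T (by norm_num : (1:ℤ) ≤ 0 + 1)]
        exact tcIn_alpha_tors_zero hT
      · rcases eq_or_lt_of_le (by omega : k ≤ -1) with hm | hm
        · rw [hm, torsSeq_of_neg T le_rfl]
          rw [show (-1 : ℤ) + 1 = 0 by norm_num, torsSeq_zero]
          exact tcIn_alpha_univ_of_torsionClass hT
        · rw [torsSeq_of_neg T (by omega), torsSeq_of_neg T (by omega)]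
          exact tcIn_alpha_univ_univ

end Aux

lemma torsionClass_of_seq {C : ℤ → Set A} (hC : IsICESequence C)
    (hm1 : C (-1) = Set.univ) : IsTorsionClass (C 0) := by
  have h := hC.tors (-1)
  rw [show (-1:ℤ)+1 = 0 by norm_num, hm1, alphaSub_univ] at h
  exact ⟨h.subcat, h.ext, fun X Y f hf hX => h.quot f hf hX trivial⟩

lemma seq_eq_torsSeq {C : ℤ → Set A} (hC : IsICESequence C) (h1 : C 1 = zeroSubcat)
    (hm1 : C (-1) = Set.univ) : C = torsSeq (C 0) := by
  have decr : ∀ k, C (k+1) ⊆ C k := fun k X hX => ((hC.tors k).subset hX).1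
  have up : ∀ n : ℕ, C (1 + n) ⊆ zeroSubcat := by
    intro n
    induction n with
    | zero => simpa using h1 ▸ Set.Subset.rfl
    | succ n ih =>
      have e : (1 + ((n+1 : ℕ) : ℤ)) = (1 + (n : ℤ)) + 1 := by push_cast; ring
      rw [e]
      exact (decr _).trans ih
  have zeroSub : ∀ k, (zeroSubcat : Set A) ⊆ C k := fun k X hX =>
    (hC.ice k).subcat.mem_of_iso hX.isoZero.symm (hC.ice k).subcat.zero_mem
  have down : ∀ n : ℕ, C (-1 - n) = Set.univ := by
    intro n
    induction n with
    | zero => simpa using hm1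
    | succ n ih =>
      apply Set.eq_univ_of_univ_subset
      intro X _
      have hx : X ∈ C ((-1 - ((n+1 : ℕ) : ℤ)) + 1) := by
        have e : (-1 - ((n+1 : ℕ) : ℤ)) + 1 = -1 - (n : ℤ) := by push_cast; ring
        rw [e, ih]
        trivial
      exact ((hC.tors (-1 - ((n+1 : ℕ) : ℤ))).subset hx).1
  funext k
  rcases le_or_gt 1 k with h | h
  · rw [torsSeq_of_one_le _ h]
    apply Set.Subset.antisymm
    · have e : k = 1 + (((k-1).toNat : ℕ) : ℤ) := by omega
      rw [e]
      exact up _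
    · exact zeroSub k
  · rcases eq_or_lt_of_le (by omega : k ≤ 0) with h0 | h0
    · rw [h0, torsSeq_zero]
    · rw [torsSeq_of_neg _ (by omega : k ≤ -1)]
      have e : k = -1 - ((((-1) - k).toNat : ℕ) : ℤ) := by omega
      rw [e]
      exact down _

/-- **Proposition.** For any abelian category `A`, the assignment `{C(k)}_{k∈ℤ} ↦ C(0)` is a
bijective correspondence between ICE sequences in `A` of length 2 (i.e. with `C(1) = 0` and
`C(-1) = A`) and torsion classes in `A`. -/
theorem iceSequencesLengthTwo_equiv_torsionClasses {A : Type*} [Category A] [Abelian A] :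
    ∃ e : {C : ℤ → Set A // IsICESequence C ∧ C 1 = zeroSubcat ∧ C (-1) = Set.univ} ≃
        {T : Set A // IsTorsionClass T},
      ∀ C, (e C).1 = C.1 0 := by
  refine ⟨Equiv.mk
    (fun C => ⟨C.1 0, torsionClass_of_seq C.2.1 C.2.2.2⟩)
    (fun T => ⟨torsSeq T.1, torsSeq_isICESequence T.2, torsSeq_of_one_le _ le_rfl,
      torsSeq_of_neg _ le_rfl⟩)
    (fun C => Subtype.ext (seq_eq_torsSeq C.2.1 C.2.2.1 C.2.2.2).symm)
    (fun T => Subtype.ext (torsSeq_zero T.1)),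
    fun C => rfl⟩

end ICEPaper
end

section
/- Let U be a homology-determined aisle in D. Then H^k U is a contravariantly finite subcategory of the heart H for every k ∈ ℤ. -/
open CategoryTheory Limits ZeroObject

namespace ICEPaper

open Pretriangulated Triangulated

variable {D : Type*} [Category D] [Preadditive D] [HasZeroObject D] [HasShift D ℤ]
  [∀ n : ℤ, (shiftFunctor D n).Additive] [Pretriangulated D]

variable (t : TStructure D)

variable {t} {A : Type*} [Category A] [Abelian A] (hd : HeartData t A)

/-- **Proposition.** Let `U` be a homology-determined aisle in `D`. Then `H^k U` is a
contravariantly finite subcategory of the heart `H` for every `k ∈ ℤ`. -/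
theorem contravariantlyFinite_HkSet_of_homDet_aisle
    {D : Type*} [Category D] [Preadditive D] [HasZeroObject D] [HasShift D ℤ]
    [∀ n : ℤ, (shiftFunctor D n).Additive] [Pretriangulated D]
    {t : Triangulated.TStructure D} {A : Type*} [Category A] [Abelian A]
    (hd : HeartData t A) {U : Set D} (hU : IsAisle U) (hdet : IsHomDet hd U) :
    ∀ k : ℤ, ContravariantlyFinite (HkSet hd U k) := by
  intro k Y
  obtain ⟨t', rfl⟩ := hU
  -- truncation triangle for `Z = (ι Y)⟦-k⟧` with respect to `t'`
  set Z : D := (hd.ι.obj Y)⟦(-k)⟧ with hZ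
  obtain ⟨X₀, X₁, hX₀, hX₁, a, b, c, hT⟩ := t'.exists_triangle Z 0 1 (by omega)
  have hX₀U : X₀ ∈ DLE t' 0 := hX₀
  -- the compatibility iso `(·⟦-k⟧)⟦k⟧ ≅ 𝟭`
  set E := shiftFunctorCompIsoId D (-k) k (by omega) with hE
  -- the approximation object and map
  refine ⟨hd.H k X₀, ⟨X₀, hX₀U, ⟨Iso.refl _⟩⟩,
    hd.H0.map (a⟦k⟧') ≫ hd.H0.map (E.hom.app (hd.ι.obj Y)) ≫ hd.heartIso.hom.app Y,
    ?_⟩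
  rintro B' ⟨X', hX', ⟨e'⟩⟩ g
  -- `ι B'⟦-k⟧ ∈ U`
  have hmem : (hd.ι.obj B')⟦(-k)⟧ ∈ DLE t' 0 := by
    have h1 : (hd.ι.obj (hd.H k X'))⟦(-k)⟧ ∈ DLE t' 0 := (hdet X').1 hX' k
    exact (t'.le 0).prop_of_iso ((shiftFunctor D (-k)).mapIso (hd.ι.mapIso e')).symm h1
  -- the shifted map factors through the truncation
  have hzero : ((hd.ι.map g)⟦(-k)⟧') ≫ b = 0 :=
    t'.zero' _ hmem hX₁
  obtain ⟨g'', hg''⟩ := Triangle.coyoneda_exact₂ _ hT ((hd.ι.map g)⟦(-k)⟧') hzero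
  refine ⟨hd.heartIso.inv.app B' ≫ hd.H0.map (E.inv.app (hd.ι.obj B')) ≫
    hd.H0.map (g''⟦k⟧'), ?_⟩
  have hnat : E.inv.app (hd.ι.obj B') ≫ ((hd.ι.map g)⟦(-k)⟧')⟦k⟧' =
      hd.ι.map g ≫ E.inv.app (hd.ι.obj Y) := (E.inv.naturality (hd.ι.map g)).symm
  have key : (g'' ≫ a)⟦k⟧' = ((hd.ι.map g)⟦(-k)⟧')⟦k⟧' := by
    congr 1; exact hg''.symm
  calc (hd.heartIso.inv.app B' ≫ hd.H0.map (E.inv.app (hd.ι.obj B')) ≫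
        hd.H0.map (g''⟦k⟧')) ≫
      hd.H0.map (a⟦k⟧') ≫ hd.H0.map (E.hom.app (hd.ι.obj Y)) ≫ hd.heartIso.hom.app Y
      = hd.heartIso.inv.app B' ≫
        hd.H0.map (E.inv.app (hd.ι.obj B') ≫ ((g'' ≫ a)⟦k⟧') ≫ E.hom.app (hd.ι.obj Y)) ≫
        hd.heartIso.hom.app Y := by
        simp only [Functor.map_comp, Category.assoc]
        rw [Functor.map_comp (shiftFunctor D k) g'' a, Functor.map_comp, Category.assoc]
    _ = hd.heartIso.inv.app B' ≫
        hd.H0.map (hd.ι.map g ≫ E.inv.app (hd.ι.obj Y) ≫ E.hom.app (hd.ι.obj Y)) ≫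
        hd.heartIso.hom.app Y := by
        rw [key]
        congr 2
        rw [← Category.assoc, hnat, Category.assoc]
    _ = hd.heartIso.inv.app B' ≫ hd.H0.map (hd.ι.map g) ≫ hd.heartIso.hom.app Y := by
        rw [Iso.inv_hom_id_app]
        simp
    _ = g := by
        have := hd.heartIso.hom.naturality g
        simp only [Functor.comp_map, Functor.id_map] at this
        rw [this, ← Category.assoc, Iso.inv_hom_id_app, Category.id_comp]


end ICEPaper
end
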